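/- arXiv:1612.03423 — 3 statements merged into one kernel-verified Lean document; each statement's English description precedes it below -/
import Mathlib

section
/- If an effect algebra satisfies the coherence law (whenever p⊥q, q⊥r, r⊥p, the sum p⊕q⊕r is defined), then with the induced order and orthocomplement p ↦ p^c it is an orthomodular poset, and for orthogonal p, q one has p⊕q = p∨q. -/
structure EffectAlgebra (α : Type*) where
  defined : α → α → Prop
  add : α → α → α
  zero : α
  one : α
  E1_def : ∀ p q, defined p q → defined q p
  E1_comm : ∀ p q, defined p q → add p q = add q p
  E2_def₁ : ∀ p q r, defined q r → defined p (add q r) → defined p q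
  E2_def₂ : ∀ p q r, defined q r → defined p (add q r) → defined (add p q) r
  E2_assoc : ∀ p q r, defined q r → defined p (add q r) →
    add p (add q r) = add (add p q) r
  E3 : ∀ p, ∃! q, defined p q ∧ add p q = one
  E4 : ∀ p, defined p one → p = zero

namespace EffectAlgebra

variable {α : Type*}

/-- The orthosupplement `p^c`: the unique `q` with `p ⊕ q = 𝟙`. -/
noncomputable def compl (E : EffectAlgebra α) (p : α) : α :=
  (E.E3 p).exists.choose

/-- The induced order: `p ≤ q` iff `∃ r, p ⊕ r` is defined and equals `q`. -/
def le (E : EffectAlgebra α) (p q : α) : Prop :=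
  ∃ r, E.defined p r ∧ E.add p r = q

/-- `s` is the supremum of `p` and `q` w.r.t. the induced order. -/
def isSup (E : EffectAlgebra α) (p q s : α) : Prop :=
  E.le p s ∧ E.le q s ∧ ∀ t, E.le p t → E.le q t → E.le s t

/-- `m` is the infimum of `p` and `q` w.r.t. the induced order. -/
def isInf (E : EffectAlgebra α) (p q m : α) : Prop :=
  E.le m p ∧ E.le m q ∧ ∀ t, E.le t p → E.le t q → E.le t m

end EffectAlgebra

namespace EffectAlgebra

variable {α : Type*} (E : EffectAlgebra α)

lemma compl_defined' (p : α) : E.defined p (E.compl p) := (E.E3 p).exists.choose_spec.1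

lemma add_compl' (p : α) : E.add p (E.compl p) = E.one := (E.E3 p).exists.choose_spec.2

lemma compl_eq' {p q : α} (h : E.defined p q) (h2 : E.add p q = E.one) : q = E.compl p := by
  obtain ⟨x, hx, hu⟩ := E.E3 p
  rw [hu q ⟨h, h2⟩, hu (E.compl p) ⟨E.compl_defined' p, E.add_compl' p⟩]

lemma rearr' {a b c : α} (hab : E.defined a b) (habc : E.defined (E.add a b) c) :
    E.defined a c ∧ E.defined b (E.add a c) ∧
      E.add (E.add a b) c = E.add b (E.add a c) := by
  have h1 : E.defined c (E.add a b) := E.E1_def _ _ habc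
  have h2 : E.defined c a := E.E2_def₁ c a b hab h1
  have h3 : E.defined (E.add c a) b := E.E2_def₂ c a b hab h1
  have h4 : E.add c (E.add a b) = E.add (E.add c a) b := E.E2_assoc c a b hab h1
  have h5 : E.defined b (E.add c a) := E.E1_def _ _ h3
  refine ⟨E.E1_def _ _ h2, ?_, ?_⟩
  · rwa [E.E1_comm c a h2] at h5
  · rw [E.E1_comm _ _ habc, h4, E.E1_comm _ _ h3, E.E1_comm c a h2]

lemma one_add_zero' : E.defined E.one E.zero ∧ E.add E.one E.zero = E.one := by
  have h := E.compl_defined' E.one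
  have h2 := E.add_compl' E.one
  have h0 : E.compl E.one = E.zero := E.E4 _ (E.E1_def _ _ h)
  rw [h0] at h h2
  exact ⟨h, h2⟩

lemma zero_add' (p : α) : E.defined E.zero p ∧ E.add E.zero p = p := by
  have h01 : E.defined E.zero E.one := E.E1_def _ _ E.one_add_zero'.1
  have h01' : E.add E.zero E.one = E.one := by
    rw [E.E1_comm _ _ h01]; exact E.one_add_zero'.2
  have hp := E.compl_defined' p
  have hp2 := E.add_compl' p
  have h : E.defined E.zero (E.add p (E.compl p)) := by rw [hp2]; exact h01
  have d1 : E.defined E.zero p := E.E2_def₁ _ _ _ hp h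
  have d2 : E.defined (E.add E.zero p) (E.compl p) := E.E2_def₂ _ _ _ hp h
  have e : E.add E.zero (E.add p (E.compl p)) = E.add (E.add E.zero p) (E.compl p) :=
    E.E2_assoc _ _ _ hp h
  rw [hp2, h01'] at e
  have e1 : E.add E.zero p = E.compl (E.compl p) := by
    refine E.compl_eq' (E.E1_def _ _ d2) ?_
    rw [E.E1_comm _ _ (E.E1_def _ _ d2)]; exact e.symm
  have e2 : p = E.compl (E.compl p) :=
    E.compl_eq' (E.E1_def _ _ hp) (by rw [E.E1_comm _ _ (E.E1_def _ _ hp)]; exact hp2)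
  refine ⟨d1, ?_⟩; rw [e1, ← e2]

lemma compl_compl' (p : α) : E.compl (E.compl p) = p := by
  have hp := E.compl_defined' p
  exact (E.compl_eq' (E.E1_def _ _ hp)
    (by rw [E.E1_comm _ _ (E.E1_def _ _ hp)]; exact E.add_compl' p)).symm

lemma cancel' {a b c : α} (hab : E.defined a b) (hac : E.defined a c)
    (h : E.add a b = E.add a c) : b = c := by
  set d := E.compl (E.add a b) with hd
  have hd1 : E.defined (E.add a b) d := E.compl_defined' _
  have hd2 : E.add (E.add a b) d = E.one := E.add_compl' _
  obtain ⟨_, db, eb⟩ := E.rearr' hab hd1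
  have hd1' : E.defined (E.add a c) d := by rwa [← h]
  have hd2' : E.add (E.add a c) d = E.one := by rwa [← h]
  obtain ⟨had, dc, ec⟩ := E.rearr' hac hd1'
  have cb : E.add a d = E.compl b := E.compl_eq' db (by rw [← eb]; exact hd2)
  have cc : E.add a d = E.compl c := E.compl_eq' dc (by rw [← ec]; exact hd2')
  have : E.compl b = E.compl c := by rw [← cb, cc]
  calc b = E.compl (E.compl b) := (E.compl_compl' b).symm
    _ = E.compl (E.compl c) := by rw [this]
    _ = c := E.compl_compl' c

lemma sum_eq_zero' {a b : α} (hab : E.defined a b) (h : E.add a b = E.zero) :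
    a = E.zero ∧ b = E.zero := by
  have h1 : E.defined (E.add a b) E.one := by
    rw [h]; exact E.E1_def _ _ E.one_add_zero'.1
  obtain ⟨ha1, -, -⟩ := E.rearr' hab h1
  have ha : a = E.zero := E.E4 a ha1
  refine ⟨ha, ?_⟩
  rw [ha, (E.zero_add' b).2] at h; exact h

lemma le_refl' (p : α) : E.le p p :=
  ⟨E.zero, E.E1_def _ _ (E.zero_add' p).1,
    by rw [E.E1_comm _ _ (E.E1_def _ _ (E.zero_add' p).1)]; exact (E.zero_add' p).2⟩

lemma le_trans' {p q t : α} (h1 : E.le p q) (h2 : E.le q t) : E.le p t := by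
  obtain ⟨r, hr, hr2⟩ := h1
  obtain ⟨s, hs, hs2⟩ := h2
  have h3 : E.defined (E.add r p) s := by
    rw [E.E1_comm r p (E.E1_def _ _ hr), hr2]; exact hs
  obtain ⟨-, dp, e⟩ := E.rearr' (E.E1_def _ _ hr) h3
  refine ⟨E.add r s, dp, ?_⟩
  rw [← e, E.E1_comm r p (E.E1_def _ _ hr), hr2, hs2]

lemma le_iff_defined_compl' {x t : α} : E.le x t ↔ E.defined x (E.compl t) := by
  constructor
  · rintro ⟨a, ha, rfl⟩
    have h : E.defined (E.add x a) (E.compl (E.add x a)) := E.compl_defined' _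
    exact (E.rearr' ha h).1
  · intro h
    set u := E.compl (E.add x (E.compl t)) with hu
    have h1 : E.defined (E.add x (E.compl t)) u := E.compl_defined' _
    have h2 : E.add (E.add x (E.compl t)) u = E.one := E.add_compl' _
    obtain ⟨hxu, htu, e⟩ := E.rearr' h h1
    have : E.add x u = E.compl (E.compl t) := E.compl_eq' htu (by rw [← e]; exact h2)
    rw [E.compl_compl'] at this
    exact ⟨u, hxu, this⟩

lemma compl_antitone' {p q : α} (h : E.le p q) : E.le (E.compl q) (E.compl p) := by
  obtain ⟨r, hr, rfl⟩ := h
  have h1 : E.defined (E.add r p) (E.compl (E.add p r)) := by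
    rw [E.E1_comm r p (E.E1_def _ _ hr)]; exact E.compl_defined' _
  obtain ⟨drc, dp, e⟩ := E.rearr' (E.E1_def _ _ hr) h1
  have e2 : E.add p (E.add r (E.compl (E.add p r))) = E.one := by
    rw [← e, E.E1_comm r p (E.E1_def _ _ hr)]; exact E.add_compl' _
  have e3 : E.add r (E.compl (E.add p r)) = E.compl p := E.compl_eq' dp e2
  refine ⟨r, E.E1_def _ _ drc, ?_⟩
  rw [E.E1_comm _ _ (E.E1_def _ _ drc)]
  exact e3

end EffectAlgebra

/-- If an effect algebra satisfies the coherence law, then with the induced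
order and the orthosupplement it is an orthomodular poset, and `p ⊕ q` is the
supremum of orthogonal `p, q`. -/
theorem coherence_implies_orthomodularPoset {α : Type*} (E : EffectAlgebra α)
    (coh : ∀ p q r, E.defined p q → E.defined q r → E.defined r p →
      E.defined (E.add p q) r) :
    (∀ p q, E.le p q → E.le (E.compl q) (E.compl p)) ∧
    (∀ p, E.compl (E.compl p) = p) ∧
    (∀ p q, E.defined p q → E.isSup p q (E.add p q)) ∧
    (∀ p, E.isSup p (E.compl p) E.one) ∧
    (∀ p q, E.le p q → ∃ m, E.isInf q (E.compl p) m ∧ E.isSup p m q) := by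
  have sup : ∀ p q, E.defined p q → E.isSup p q (E.add p q) := by
    intro p q hpq
    refine ⟨⟨q, hpq, rfl⟩, ⟨p, E.E1_def _ _ hpq, (E.E1_comm _ _ (E.E1_def _ _ hpq))⟩, ?_⟩
    intro t hpt hqt
    have dp : E.defined p (E.compl t) := E.le_iff_defined_compl'.mp hpt
    have dq : E.defined q (E.compl t) := E.le_iff_defined_compl'.mp hqt
    exact E.le_iff_defined_compl'.mpr (coh p q (E.compl t) hpq dq (E.E1_def _ _ dp))
  refine ⟨fun p q h => E.compl_antitone' h, E.compl_compl', sup, ?_, ?_⟩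
  · intro p
    have hp := E.compl_defined' p
    refine ⟨⟨E.compl p, hp, E.add_compl' p⟩,
      ⟨p, E.E1_def _ _ hp, by rw [E.E1_comm _ _ (E.E1_def _ _ hp)]; exact E.add_compl' p⟩, ?_⟩
    intro t h1 h2
    have d1 : E.defined p (E.compl t) := E.le_iff_defined_compl'.mp h1
    have d2 : E.defined (E.compl p) (E.compl t) := E.le_iff_defined_compl'.mp h2
    have d3 := coh p (E.compl p) (E.compl t) hp d2 (E.E1_def _ _ d1)
    rw [E.add_compl' p] at d3
    exact E.le_iff_defined_compl'.mpr d3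
  · rintro p q ⟨m, hm, rfl⟩
    refine ⟨m, ⟨⟨p, E.E1_def _ _ hm, E.E1_comm _ _ (E.E1_def _ _ hm)⟩, ?_, ?_⟩,
      sup p m hm⟩
    · refine E.le_iff_defined_compl'.mpr ?_
      rw [E.compl_compl']
      exact E.E1_def _ _ hm
    · intro t htq htp
      have dtp : E.defined t p := by
        have := E.le_iff_defined_compl'.mp htp
        rwa [E.compl_compl'] at this
      have dtq : E.defined t (E.compl (E.add p m)) := E.le_iff_defined_compl'.mp htq
      have dqp : E.defined (E.compl (E.add p m)) p := by
        have : E.le p (E.add p m) := ⟨m, hm, rfl⟩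
        exact E.E1_def _ _ (E.le_iff_defined_compl'.mp this)
      have d4 : E.defined (E.add p t) (E.compl (E.add p m)) :=
        coh p t (E.compl (E.add p m)) (E.E1_def _ _ dtp) dtq dqp
      obtain ⟨s, ds, hs⟩ := E.le_iff_defined_compl'.mpr d4
      have h3 : E.defined (E.add t p) s := by
        rw [E.E1_comm t p dtp]; exact ds
      obtain ⟨dts, dpts, e⟩ := E.rearr' dtp h3
      have e2 : E.add p (E.add t s) = E.add p m := by
        rw [← e, E.E1_comm t p dtp]; exact hs
      exact ⟨s, dts, E.cancel' dpts hm e2⟩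
end

section
/- Every orthomodular poset, with p⊕q defined as p∨q when p ≤ q^c, is an effect algebra satisfying the coherence law. -/
/-- Every orthomodular poset, with `p ⊕ q := p ∨ q` defined when `p ≤ q^c`,
is an effect algebra satisfying the coherence law. -/
theorem orthomodularPoset_is_effectAlgebra {α : Type*} [PartialOrder α]
    [OrderBot α] [OrderTop α] (compl : α → α)
    (hrev : ∀ p q : α, p ≤ q → compl q ≤ compl p)
    (hinv : ∀ p : α, compl (compl p) = p)
    (sup : α → α → α)
    (hsup : ∀ p q : α, p ≤ compl q → IsLUB {p, q} (sup p q))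
    (hcompl : ∀ p : α, sup p (compl p) = ⊤)
    (hom : ∀ p q : α, p ≤ q → q = sup p (compl (sup (compl q) p))) :
    -- E1
    (∀ p q : α, p ≤ compl q → q ≤ compl p ∧ sup p q = sup q p) ∧
    -- E2
    (∀ p q r : α, q ≤ compl r → p ≤ compl (sup q r) →
      p ≤ compl q ∧ sup p q ≤ compl r ∧
        sup p (sup q r) = sup (sup p q) r) ∧
    -- E3
    (∀ p : α, ∃! q, p ≤ compl q ∧ sup p q = ⊤) ∧
    -- E4
    (∀ p : α, p ≤ compl ⊤ → p = ⊥) ∧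
    -- coherence law
    (∀ p q r : α, p ≤ compl q → q ≤ compl r → p ≤ compl r →
      sup p q ≤ compl r) := by

  -- basic facts about LUBs of pairs
  have mem1 : ∀ p q : α, p ∈ ({p, q} : Set α) := fun p q => Set.mem_insert _ _
  have mem2 : ∀ p q : α, q ∈ ({p, q} : Set α) := fun p q => Set.mem_insert_of_mem _ rfl
  have ub : ∀ p q t : α, p ≤ t → q ≤ t → t ∈ upperBounds ({p, q} : Set α) := by
    rintro p q t hp hq x hx
    rcases hx with rfl | hx
    · exact hp
    · rcases hx with rfl; exact hq
  -- E1
  have E1 : ∀ p q : α, p ≤ compl q → q ≤ compl p ∧ sup p q = sup q p := by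
    intro p q h
    have hq : q ≤ compl p := by
      have := hrev p (compl q) h
      rwa [hinv] at this
    refine ⟨hq, ?_⟩
    have h1 := hsup p q h
    have h2 := hsup q p hq
    rw [Set.pair_comm q p] at h2
    exact h1.unique h2
  -- compl ⊤ = ⊥
  have hct : compl ⊤ = ⊥ := by
    have : compl ⊤ ≤ compl (compl ⊥) := hrev _ _ le_top
    rw [hinv] at this
    exact le_bot_iff.mp this
  have hcb : compl ⊥ = ⊤ := by
    have := hinv ⊤; rw [hct] at this; exact this.symm ▸ rfl
  -- sup with ⊥
  have hsb : ∀ q : α, sup q ⊥ = q := by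
    intro q
    have h1 : q ≤ compl ⊥ := hcb ▸ le_top
    have h2 := hsup q ⊥ h1
    have h3 : IsLUB ({q, ⊥} : Set α) q := ⟨ub _ _ _ le_rfl bot_le, fun t ht => ht (mem1 _ _)⟩
    exact h2.unique h3
  -- E2
  have E2 : ∀ p q r : α, q ≤ compl r → p ≤ compl (sup q r) →
      p ≤ compl q ∧ sup p q ≤ compl r ∧ sup p (sup q r) = sup (sup p q) r := by
    intro p q r hqr hp
    have A := hsup q r hqr
    have hq_le : q ≤ sup q r := A.1 (mem1 _ _)
    have hr_le : r ≤ sup q r := A.1 (mem2 _ _)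
    have hpq : p ≤ compl q := le_trans hp (hrev _ _ hq_le)
    have hpr : p ≤ compl r := le_trans hp (hrev _ _ hr_le)
    have C := hsup p q hpq
    have hsr : sup p q ≤ compl r := C.2 (ub _ _ _ hpr hqr)
    refine ⟨hpq, hsr, ?_⟩
    have B := hsup p (sup q r) hp
    have D := hsup (sup p q) r hsr
    apply B.unique
    constructor
    · apply ub
      · exact le_trans (C.1 (mem1 _ _)) (D.1 (mem1 _ _))
      · exact A.2 (ub _ _ _
          (le_trans (C.1 (mem2 _ _)) (D.1 (mem1 _ _))) (D.1 (mem2 _ _)))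
    · intro t ht
      have htp : p ≤ t := ht (mem1 _ _)
      have hts : sup q r ≤ t := ht (mem2 _ _)
      exact D.2 (ub _ _ _
        (C.2 (ub _ _ _ htp (le_trans hq_le hts))) (le_trans hr_le hts))
  refine ⟨E1, E2, ?_, ?_, ?_⟩
  · -- E3
    intro p
    refine ⟨compl p, ⟨(hinv p).symm ▸ le_rfl, hcompl p⟩, ?_⟩
    rintro q ⟨h1, h2⟩
    have hq : q ≤ compl p := (E1 p q h1).1
    have := hom q (compl p) hq
    rw [hinv, h2, hct, hsb] at this
    exact this.symm
  · -- E4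
    intro p hp
    rw [hct] at hp
    exact le_bot_iff.mp hp
  · -- coherence
    intro p q r hpq hqr hpr
    exact (hsup p q hpq).2 (ub _ _ _ hpr hqr)
end

section
/- For n ≥ 3, the concrete orthoposet of even-cardinality subsets of {1,...,2n} is not a lattice: there exist two elements with no least upper bound in Δ. -/
/-- Least upper bound of `a` and `b` inside the family `Δ`, ordered by `⊆`. -/
def lubIn {Ω : Type*} [DecidableEq Ω] (Δ : Set (Finset Ω)) (a b s : Finset Ω) : Prop :=
  s ∈ Δ ∧ a ⊆ s ∧ b ⊆ s ∧ ∀ c ∈ Δ, a ⊆ c → b ⊆ c → s ⊆ c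

/-- For `n ≥ 3`, the concrete orthoposet of even-cardinality subsets of
`{1,…,2n}` is not a lattice: some pair has no least upper bound in `Δ`. -/
theorem even_subsets_not_lattice (n : ℕ) (hn : 3 ≤ n) :
    ∃ A B : Finset (Fin (2 * n)), Even A.card ∧ Even B.card ∧
      ¬ ∃ s, lubIn {C : Finset (Fin (2 * n)) | Even C.card} A B s := by
  have h6 : 6 ≤ 2 * n := by omega
  set e0 : Fin (2 * n) := ⟨0, by omega⟩
  set e1 : Fin (2 * n) := ⟨1, by omega⟩
  set e2 : Fin (2 * n) := ⟨2, by omega⟩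
  set e3 : Fin (2 * n) := ⟨3, by omega⟩
  set e4 : Fin (2 * n) := ⟨4, by omega⟩
  have hne : ∀ i j : Fin (2 * n), i.val ≠ j.val → i ≠ j := by
    intro i j h hij; exact h (congrArg Fin.val hij)
  refine ⟨{e0, e1}, {e0, e2}, ?_, ?_, ?_⟩
  · rw [Finset.card_insert_of_notMem (by simp [e0, e1, Fin.ext_iff]),
      Finset.card_singleton]; exact even_two
  · rw [Finset.card_insert_of_notMem (by simp [e0, e2, Fin.ext_iff]),
      Finset.card_singleton]; exact even_two
  · rintro ⟨s, hsΔ, hAs, hBs, hmin⟩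
    have hc1 : ({e0, e1, e2, e3} : Finset (Fin (2 * n))) ∈
        {C : Finset (Fin (2 * n)) | Even C.card} := by
      have : ({e0, e1, e2, e3} : Finset (Fin (2 * n))).card = 4 := by
        rw [show ({e0, e1, e2, e3} : Finset (Fin (2 * n))) = {e0, e1, e2, e3} from rfl]
        repeat rw [Finset.card_insert_of_notMem (by simp [e0, e1, e2, e3, Fin.ext_iff])]
        simp
      simp [Set.mem_setOf_eq, this]; decide
    have hc2 : ({e0, e1, e2, e4} : Finset (Fin (2 * n))) ∈
        {C : Finset (Fin (2 * n)) | Even C.card} := by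
      have : ({e0, e1, e2, e4} : Finset (Fin (2 * n))).card = 4 := by
        repeat rw [Finset.card_insert_of_notMem (by simp [e0, e1, e2, e4, Fin.ext_iff])]
        simp
      simp [Set.mem_setOf_eq, this]; decide
    have hs1 := hmin _ hc1 (by intro x hx; simp at hx; rcases hx with h | h <;> simp [h])
      (by intro x hx; simp at hx; rcases hx with h | h <;> simp [h])
    have hs2 := hmin _ hc2 (by intro x hx; simp at hx; rcases hx with h | h <;> simp [h])
      (by intro x hx; simp at hx; rcases hx with h | h <;> simp [h])
    have hsub : s ⊆ {e0, e1, e2} := by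
      intro x hx
      have h1 := hs1 hx
      have h2 := hs2 hx
      simp at h1 h2 ⊢
      rcases h1 with h | h | h | h
      · exact Or.inl h
      · exact Or.inr (Or.inl h)
      · exact Or.inr (Or.inr h)
      · rcases h2 with h' | h' | h' | h'
        · exact Or.inl h'
        · exact Or.inr (Or.inl h')
        · exact Or.inr (Or.inr h')
        · exact absurd (h ▸ h') (by simp [e3, e4, Fin.ext_iff])
    have hsup : ({e0, e1, e2} : Finset (Fin (2 * n))) ⊆ s := by
      intro x hx
      simp at hx
      rcases hx with h | h | h
      · exact hAs (by simp [h])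
      · exact hAs (by simp [h])
      · exact hBs (by simp [h])
    have hse : s = {e0, e1, e2} := Finset.Subset.antisymm hsub hsup
    have hcard : s.card = 3 := by
      rw [hse]
      repeat rw [Finset.card_insert_of_notMem (by simp [e0, e1, e2, Fin.ext_iff])]
      simp
    rw [Set.mem_setOf_eq, hcard] at hsΔ
    exact (by decide : ¬ Even 3) hsΔ
end
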